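/- arXiv:1206.1874 — 2 statements merged into one kernel-verified Lean document; each statement's English description precedes it below -/
import Mathlib

section
/- The coordinate random variables Y_1, …, Y_K are mutually independent — i.e., p(A) = ∏_{j ∈ A} P(Y_j = 1) · ∏_{j ∉ A} P(Y_j = 0) for every A ⊆ Fin K, where P(Y_j = 1) = Σ_{B ∋ j} p(B) — if and only if f(A) = 0 for every A ⊆ Fin K with |A| ≥ 2. -/
open Finset

lemma neg_one_pow_sub_real (n k : ℕ) (h : k ≤ n) :
    (-1 : ℝ) ^ (n - k) = (-1) ^ n * (-1) ^ k := by
  have hk : ((-1 : ℝ) ^ k) * (-1) ^ k = 1 := by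
    rw [← pow_add, ← two_mul, pow_mul]; norm_num
  calc (-1 : ℝ) ^ (n - k) = (-1 : ℝ) ^ (n - k) * (((-1)^k) * (-1)^k) := by rw [hk, mul_one]
    _ = ((-1 : ℝ) ^ (n - k) * (-1)^k) * (-1)^k := by ring
    _ = (-1 : ℝ) ^ n * (-1)^k := by rw [← pow_add, Nat.sub_add_cancel h]

lemma alt_sum_zero {α : Type*} [DecidableEq α] (A : Finset α) (hA : A.Nonempty) :
    ∑ B ∈ A.powerset, (-1 : ℝ) ^ (A.card - B.card) = 0 := by
  have h : ∀ B ∈ A.powerset, (-1 : ℝ) ^ (A.card - B.card)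
      = (-1 : ℝ) ^ A.card * (-1 : ℝ) ^ B.card := fun B hB =>
    neg_one_pow_sub_real _ _ (card_le_card (mem_powerset.1 hB))
  rw [Finset.sum_congr rfl h, ← Finset.mul_sum]
  have : (∑ B ∈ A.powerset, (-1 : ℝ) ^ B.card) = 0 := by
    have := Finset.sum_powerset_neg_one_pow_card_of_nonempty (x := A) hA
    exact_mod_cast congrArg (Int.cast : ℤ → ℝ) this
  rw [this, mul_zero]

lemma alt_sum_affine {α : Type*} [DecidableEq α] (A : Finset α) (hA : 2 ≤ A.card)
    (c : ℝ) (a : α → ℝ) :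
    ∑ B ∈ A.powerset, (-1 : ℝ) ^ (A.card - B.card) * (c + ∑ j ∈ B, a j) = 0 := by
  have hAne : A.Nonempty := Finset.card_pos.1 (by omega)
  have split : ∀ B ∈ A.powerset, (-1 : ℝ) ^ (A.card - B.card) * (c + ∑ j ∈ B, a j)
      = (-1 : ℝ) ^ (A.card - B.card) * c
        + ∑ j ∈ A, (-1 : ℝ) ^ (A.card - B.card) * (if j ∈ B then a j else 0) := by
    intro B hB
    rw [← Finset.mul_sum, Finset.sum_ite_mem, Finset.inter_eq_right.2 (mem_powerset.1 hB)]
    ring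
  rw [Finset.sum_congr rfl split, Finset.sum_add_distrib, ← Finset.sum_mul,
    alt_sum_zero A hAne, zero_mul, zero_add, Finset.sum_comm]
  refine Finset.sum_eq_zero fun j hj => ?_
  have hjA : j ∉ A.erase j := Finset.notMem_erase j A
  have hins : insert j (A.erase j) = A := Finset.insert_erase hj
  rw [← hins, Finset.sum_powerset_insert hjA]
  have h1 : ∀ t ∈ (A.erase j).powerset,
      (-1 : ℝ) ^ ((insert j (A.erase j)).card - t.card) * (if j ∈ t then a j else 0) = 0 := by
    intro t ht
    have : j ∉ t := fun hc => hjA (mem_powerset.1 ht hc)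
    simp [this]
  rw [Finset.sum_congr rfl h1, Finset.sum_const, smul_zero, zero_add]
  have h2 : ∀ t ∈ (A.erase j).powerset,
      (-1 : ℝ) ^ ((insert j (A.erase j)).card - (insert j t).card) * (if j ∈ insert j t then a j else 0)
      = (-1 : ℝ) ^ ((A.erase j).card - t.card) * a j := by
    intro t ht
    have hjt : j ∉ t := fun hc => hjA (mem_powerset.1 ht hc)
    rw [Finset.card_insert_of_notMem hjA, Finset.card_insert_of_notMem hjt]
    simp [Nat.succ_sub_succ]
  rw [Finset.sum_congr rfl h2, ← Finset.sum_mul]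
  have hne : (A.erase j).Nonempty := by
    rw [← Finset.card_pos, Finset.card_erase_of_mem hj]; omega
  rw [alt_sum_zero _ hne, zero_mul]

/-- Independence of Bernoulli outcomes: the coordinates `Y₁, …, Y_K` of a multivariate
Bernoulli random vector (with `P(Y = A) = p A` for `A ⊆ Fin K`) are mutually
independent, i.e. `p A = ∏_{j ∈ A} P(Y_j = 1) · ∏_{j ∉ A} P(Y_j = 0)` where
`P(Y_j = 1) = ∑_{B ∋ j} p B` and `P(Y_j = 0) = ∑_{B ∌ j} p B`, if and only if the
natural parameters `f(A) = ∑_{B ⊆ A} (-1)^(|A|-|B|) log p(B)` vanish for all `A`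
with `|A| ≥ 2`. -/
theorem mvb_independence_iff_f_vanishes
    (K : ℕ) (hK : 1 ≤ K) (p : Finset (Fin K) → ℝ)
    (hpos : ∀ A, 0 < p A) (hsum : ∑ A : Finset (Fin K), p A = 1)
    (f : Finset (Fin K) → ℝ)
    (hf : ∀ A : Finset (Fin K), A ≠ ∅ →
      f A = ∑ B ∈ A.powerset, (-1 : ℝ) ^ (A.card - B.card) * Real.log (p B)) :
    (∀ A : Finset (Fin K),
        p A =
          (∏ j ∈ A, ∑ B ∈ Finset.univ.filter (fun B : Finset (Fin K) => j ∈ B), p B) *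
            ∏ j ∈ Aᶜ, ∑ B ∈ Finset.univ.filter (fun B : Finset (Fin K) => j ∉ B), p B)
      ↔ ∀ A : Finset (Fin K), 2 ≤ A.card → f A = 0 := by
  set q1 : Fin K → ℝ := fun j => ∑ B ∈ Finset.univ.filter (fun B : Finset (Fin K) => j ∈ B), p B
    with hq1def
  set q0 : Fin K → ℝ := fun j => ∑ B ∈ Finset.univ.filter (fun B : Finset (Fin K) => j ∉ B), p B
    with hq0def
  have hq1pos : ∀ j, 0 < q1 j := by
    intro j
    refine Finset.sum_pos (fun B _ => hpos B) ⟨{j}, ?_⟩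
    simp
  have hq0pos : ∀ j, 0 < q0 j := by
    intro j
    refine Finset.sum_pos (fun B _ => hpos B) ⟨∅, ?_⟩
    simp
  constructor
  · -- independence → f vanishes
    intro hind A hcA
    have hAne : A ≠ ∅ := by
      intro h; rw [h] at hcA; simp at hcA
    have hlog : ∀ B : Finset (Fin K), Real.log (p B)
        = (∑ j, Real.log (q0 j)) + ∑ j ∈ B, (Real.log (q1 j) - Real.log (q0 j)) := by
      intro B
      have h1 : (∏ j ∈ B, q1 j) ≠ 0 :=
        ne_of_gt (Finset.prod_pos fun j _ => hq1pos j)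
      have h0 : (∏ j ∈ Bᶜ, q0 j) ≠ 0 :=
        ne_of_gt (Finset.prod_pos fun j _ => hq0pos j)
      rw [hind B, Real.log_mul h1 h0,
        Real.log_prod (fun j _ => ne_of_gt (hq1pos j)),
        Real.log_prod (fun j _ => ne_of_gt (hq0pos j))]
      have hcompl : (∑ j ∈ B, Real.log (q0 j)) + ∑ j ∈ Bᶜ, Real.log (q0 j)
          = ∑ j, Real.log (q0 j) := Finset.sum_add_sum_compl B _
      rw [Finset.sum_sub_distrib]
      linarith
    rw [hf A hAne, Finset.sum_congr rfl (fun B _ => by rw [hlog B])]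
    exact alt_sum_affine A hcA _ _
  · -- f vanishes → independence
    intro hvanish
    -- Step 1: log p is additive
    have step1 : ∀ n (A : Finset (Fin K)), A.card ≤ n →
        Real.log (p A) = Real.log (p ∅) + ∑ j ∈ A, (Real.log (p {j}) - Real.log (p ∅)) := by
      intro n
      induction n with
      | zero =>
        intro A hA
        have : A = ∅ := Finset.card_eq_zero.1 (Nat.le_zero.1 hA)
        subst this; simp
      | succ n ih =>
        intro A hA
        by_cases hc : A.card ≤ n
        · exact ih A hc
        by_cases h1 : A.card ≤ 1
        · interval_cases h : A.card
          · have : A = ∅ := Finset.card_eq_zero.1 h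
            subst this; simp
          · obtain ⟨j, rfl⟩ := Finset.card_eq_one.1 h
            simp
        have h2 : 2 ≤ A.card := by omega
        have hAne : A ≠ ∅ := by
          intro h; rw [h] at h2; simp at h2
        have hfA := hvanish A h2
        rw [hf A hAne] at hfA
        have hM := alt_sum_affine A h2 (Real.log (p ∅))
          (fun j => Real.log (p {j}) - Real.log (p ∅))
        have hdiff : ∑ B ∈ A.powerset, (-1 : ℝ) ^ (A.card - B.card)
            * (Real.log (p B) - (Real.log (p ∅) + ∑ j ∈ B, (Real.log (p {j}) - Real.log (p ∅)))) = 0 := by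
          have : ∀ B ∈ A.powerset, (-1 : ℝ) ^ (A.card - B.card)
              * (Real.log (p B) - (Real.log (p ∅) + ∑ j ∈ B, (Real.log (p {j}) - Real.log (p ∅))))
              = (-1 : ℝ) ^ (A.card - B.card) * Real.log (p B)
                - (-1 : ℝ) ^ (A.card - B.card) * (Real.log (p ∅) + ∑ j ∈ B, (Real.log (p {j}) - Real.log (p ∅))) := by
            intro B _; ring
          rw [Finset.sum_congr rfl this, Finset.sum_sub_distrib, ← hfA, hM, sub_zero, hfA]
        have hsingle := Finset.sum_eq_single_of_mem (s := A.powerset)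
          (f := fun B => (-1 : ℝ) ^ (A.card - B.card)
            * (Real.log (p B) - (Real.log (p ∅) + ∑ j ∈ B, (Real.log (p {j}) - Real.log (p ∅)))))
          A (Finset.mem_powerset_self A)
          (by
            intro B hB hBA
            have hsub : B ⊆ A := Finset.mem_powerset.1 hB
            have hlt : B.card < A.card := Finset.card_lt_card (Finset.ssubset_iff_subset_ne.2 ⟨hsub, hBA⟩)
            have : B.card ≤ n := by omega
            simp [ih B this])
        rw [hsingle] at hdiff
        simp only [Nat.sub_self, pow_zero, one_mul, sub_eq_zero] at hdiff
        exact hdiff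
    have hadd : ∀ A : Finset (Fin K),
        Real.log (p A) = Real.log (p ∅) + ∑ j ∈ A, (Real.log (p {j}) - Real.log (p ∅)) :=
      fun A => step1 A.card A le_rfl
    -- Step 2: product form
    set r : Fin K → ℝ := fun j => p {j} / p ∅ with hrdef
    have hrpos : ∀ j, 0 < r j := fun j => div_pos (hpos _) (hpos _)
    have step2 : ∀ A : Finset (Fin K), p A = p ∅ * ∏ j ∈ A, r j := by
      intro A
      have := hadd A
      calc p A = Real.exp (Real.log (p A)) := (Real.exp_log (hpos A)).symm
        _ = Real.exp (Real.log (p ∅)) * ∏ j ∈ A, Real.exp (Real.log (p {j}) - Real.log (p ∅)) := by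
            rw [this, Real.exp_add, Real.exp_sum]
        _ = p ∅ * ∏ j ∈ A, r j := by
            rw [Real.exp_log (hpos ∅)]
            congr 1
            refine Finset.prod_congr rfl fun j _ => ?_
            rw [Real.exp_sub, Real.exp_log (hpos _), Real.exp_log (hpos _)]
    -- key powerset sum identity
    have hpsum : ∀ s : Finset (Fin K), ∑ t ∈ s.powerset, ∏ j ∈ t, r j
        = ∏ j ∈ s, (r j + 1) := by
      intro s
      rw [Finset.prod_add]
      exact Finset.sum_congr rfl fun t _ => by simp
    have htot : p ∅ * ∏ j, (r j + 1) = 1 := by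
      have : ∑ A : Finset (Fin K), p A = p ∅ * ∏ j, (r j + 1) := by
        rw [Finset.sum_congr rfl (fun A _ => step2 A), ← Finset.mul_sum,
          ← Finset.powerset_univ, hpsum]
      rw [← this, hsum]
    have hq0eq : ∀ j, q0 j = p ∅ * ∏ k ∈ Finset.univ.erase j, (r k + 1) := by
      intro j
      have hfe : Finset.univ.filter (fun B : Finset (Fin K) => j ∉ B)
          = ((Finset.univ : Finset (Fin K)).erase j).powerset := by
        ext B
        simp [Finset.mem_powerset, Finset.subset_erase]
      rw [hq0def]
      simp only
      rw [hfe, Finset.sum_congr rfl (fun B _ => step2 B), ← Finset.mul_sum, hpsum]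
    have hq0q : ∀ j, q0 j * (r j + 1) = 1 := by
      intro j
      rw [hq0eq j, mul_assoc, Finset.prod_erase_mul _ _ (Finset.mem_univ j)]
      exact htot
    have hq1eq : ∀ j, q1 j = r j * q0 j := by
      intro j
      have hsplit : q1 j + q0 j = 1 := by
        rw [hq1def, hq0def]
        simp only
        rw [Finset.sum_filter_add_sum_filter_not]
        exact hsum
      have := hq0q j
      nlinarith [this, hsplit]
    have hq0prod : ∏ j, q0 j = p ∅ := by
      have h1 : (∏ j, q0 j) * ∏ j, (r j + 1) = 1 := by
        rw [← Finset.prod_mul_distrib, Finset.prod_congr rfl (fun j _ => hq0q j),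
          Finset.prod_const_one]
      have hpr : 0 < ∏ j : Fin K, (r j + 1) :=
        Finset.prod_pos fun j _ => by linarith [hrpos j]
      exact mul_right_cancel₀ (ne_of_gt hpr) (by rw [h1, htot])
    intro A
    calc p A = p ∅ * ∏ j ∈ A, r j := step2 A
      _ = (∏ j ∈ A, r j) * ∏ j, q0 j := by rw [hq0prod]; ring
      _ = (∏ j ∈ A, r j) * ((∏ j ∈ A, q0 j) * ∏ j ∈ Aᶜ, q0 j) := by
          rw [Finset.prod_mul_prod_compl]
      _ = (∏ j ∈ A, r j * q0 j) * ∏ j ∈ Aᶜ, q0 j := by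
          rw [Finset.prod_mul_distrib]; ring
      _ = (∏ j ∈ A, q1 j) * ∏ j ∈ Aᶜ, q0 j := by
          rw [Finset.prod_congr rfl (fun j _ => (hq1eq j).symm)]
end

section
/- For any nonempty τ1, τ2 ⊆ Fin K, the mixed second directional derivative of the log-partition function, ∂²/∂t∂s of (t, s) ↦ b(g + t·e_{τ1} + s·e_{τ2}) at (0,0), equals [ Σ_{A ⊇ τ1 ∪ τ2} exp(S_g(A)) · exp(b(g)) − ( Σ_{A ⊇ τ1} exp(S_g(A)) ) · ( Σ_{A ⊇ τ2} exp(S_g(A)) ) ] / exp(2 b(g)), and this quantity equals the covariance Cov( ∏_{k ∈ τ1} Y_k , ∏_{k ∈ τ2} Y_k ) under the probability mass function p_g. -/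
/-- Product of coordinate indicators is the subset indicator. -/
lemma mvb_prod_indicator_aux {K : ℕ} (τ A : Finset (Fin K)) :
    (∏ k ∈ τ, (if k ∈ A then (1 : ℝ) else 0)) = if τ ⊆ A then 1 else 0 := by
  by_cases h : τ ⊆ A
  · rw [if_pos h]
    exact Finset.prod_eq_one fun k hk => if_pos (h hk)
  · rw [if_neg h]
    obtain ⟨k, hk, hkA⟩ := Finset.not_subset.mp h
    exact Finset.prod_eq_zero hk (if_neg hkA)

/-- Mixed second directional derivative of the log-partition function
`b(g) = log ∑_{A ⊆ Fin K} exp(S_g A)` (with `S_g(A) = ∑_{∅ ≠ B ⊆ A} g(B)`): for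
nonempty `τ₁, τ₂ ⊆ Fin K`, the derivative at `t = 0` of
`t ↦ d/ds|₀ b (g + t • e_{τ₁} + s • e_{τ₂})` equals
`(∑_{A ⊇ τ₁ ∪ τ₂} exp(S_g A) · exp(b g) - (∑_{A ⊇ τ₁} exp(S_g A)) · (∑_{A ⊇ τ₂} exp(S_g A))) / exp(2 b g)`,
and this quantity is the covariance `Cov(∏_{k ∈ τ₁} Y_k, ∏_{k ∈ τ₂} Y_k)` under the
pmf `p_g(A) = exp (S_g A - b g)`. -/
theorem mvb_log_partition_second_derivative
    (K : ℕ) (hK : 1 ≤ K)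
    (Sg : (Finset (Fin K) → ℝ) → Finset (Fin K) → ℝ)
    (hSg : ∀ (g : Finset (Fin K) → ℝ) (A : Finset (Fin K)),
      Sg g A = ∑ B ∈ A.powerset.erase ∅, g B)
    (b : (Finset (Fin K) → ℝ) → ℝ)
    (hb : ∀ g : Finset (Fin K) → ℝ,
      b g = Real.log (∑ A : Finset (Fin K), Real.exp (Sg g A)))
    (g : Finset (Fin K) → ℝ) (hg0 : g ∅ = 0)
    (τ1 τ2 : Finset (Fin K)) (hτ1 : τ1.Nonempty) (hτ2 : τ2.Nonempty) :
    HasDerivAt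
        (fun t : ℝ => deriv
          (fun s : ℝ => b (g + t • (Pi.single τ1 1 : Finset (Fin K) → ℝ)
            + s • (Pi.single τ2 1 : Finset (Fin K) → ℝ))) 0)
        (((∑ A ∈ Finset.univ.filter (fun A : Finset (Fin K) => τ1 ∪ τ2 ⊆ A),
              Real.exp (Sg g A)) * Real.exp (b g)
            - (∑ A ∈ Finset.univ.filter (fun A : Finset (Fin K) => τ1 ⊆ A),
                Real.exp (Sg g A)) *
              ∑ A ∈ Finset.univ.filter (fun A : Finset (Fin K) => τ2 ⊆ A),
                Real.exp (Sg g A)) / Real.exp (2 * b g)) 0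
      ∧
    ((∑ A ∈ Finset.univ.filter (fun A : Finset (Fin K) => τ1 ∪ τ2 ⊆ A),
          Real.exp (Sg g A)) * Real.exp (b g)
        - (∑ A ∈ Finset.univ.filter (fun A : Finset (Fin K) => τ1 ⊆ A),
            Real.exp (Sg g A)) *
          ∑ A ∈ Finset.univ.filter (fun A : Finset (Fin K) => τ2 ⊆ A),
            Real.exp (Sg g A)) / Real.exp (2 * b g)
      =
    (∑ A : Finset (Fin K), Real.exp (Sg g A - b g) *
        ((∏ k ∈ τ1, (if k ∈ A then (1 : ℝ) else 0)) *
          ∏ k ∈ τ2, (if k ∈ A then (1 : ℝ) else 0)))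
      - (∑ A : Finset (Fin K), Real.exp (Sg g A - b g) *
          ∏ k ∈ τ1, (if k ∈ A then (1 : ℝ) else 0)) *
        ∑ A : Finset (Fin K), Real.exp (Sg g A - b g) *
          ∏ k ∈ τ2, (if k ∈ A then (1 : ℝ) else 0) := by
  classical
  have hτ1ne : τ1 ≠ ∅ := hτ1.ne_empty
  have hτ2ne : τ2 ≠ ∅ := hτ2.ne_empty
  set c1 : Finset (Fin K) → ℝ := fun A => if τ1 ⊆ A then 1 else 0 with hc1def
  set c2 : Finset (Fin K) → ℝ := fun A => if τ2 ⊆ A then 1 else 0 with hc2def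
  -- Step 1: the perturbed S
  have hS : ∀ (t s : ℝ) (A : Finset (Fin K)),
      Sg (g + t • (Pi.single τ1 1 : Finset (Fin K) → ℝ)
        + s • (Pi.single τ2 1 : Finset (Fin K) → ℝ)) A
        = Sg g A + t * c1 A + s * c2 A := by
    intro t s A
    rw [hSg, hSg]
    have h1 : ∀ B ∈ A.powerset.erase ∅,
        (g + t • (Pi.single τ1 1 : Finset (Fin K) → ℝ)
          + s • (Pi.single τ2 1 : Finset (Fin K) → ℝ)) B
        = g B + t * (if B = τ1 then 1 else 0) + s * (if B = τ2 then 1 else 0) := by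
      intro B _
      simp [Pi.single_apply]
    rw [Finset.sum_congr rfl h1, Finset.sum_add_distrib, Finset.sum_add_distrib]
    congr 1
    · congr 1
      rw [← Finset.mul_sum, Finset.sum_ite_eq' _ τ1 (fun _ => (1:ℝ))]
      simp only [hc1def, Finset.mem_erase, Finset.mem_powerset]
      simp [hτ1ne]
    · rw [← Finset.mul_sum, Finset.sum_ite_eq' _ τ2 (fun _ => (1:ℝ))]
      simp only [hc2def, Finset.mem_erase, Finset.mem_powerset]
      simp [hτ2ne]
  -- Step 2: denominator and numerator of the inner derivative
  set D : ℝ → ℝ := fun t => ∑ A : Finset (Fin K), Real.exp (Sg g A + t * c1 A) with hDdef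
  set N : ℝ → ℝ := fun t => ∑ A : Finset (Fin K), c2 A * Real.exp (Sg g A + t * c1 A)
    with hNdef
  have hDpos : ∀ t, 0 < D t := fun t =>
    Finset.sum_pos (fun A _ => Real.exp_pos _) Finset.univ_nonempty
  have hinner : ∀ t : ℝ,
      deriv (fun s : ℝ => b (g + t • (Pi.single τ1 1 : Finset (Fin K) → ℝ)
        + s • (Pi.single τ2 1 : Finset (Fin K) → ℝ))) 0 = N t / D t := by
    intro t
    have h1 : (fun s : ℝ => b (g + t • (Pi.single τ1 1 : Finset (Fin K) → ℝ)
        + s • (Pi.single τ2 1 : Finset (Fin K) → ℝ)))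
        = fun s : ℝ => Real.log (∑ A : Finset (Fin K),
            Real.exp (Sg g A + t * c1 A + s * c2 A)) := by
      funext s
      rw [hb]
      congr 1
      exact Finset.sum_congr rfl fun A _ => by rw [hS]
    rw [h1]
    have h2 : HasDerivAt (fun s : ℝ => ∑ A : Finset (Fin K),
        Real.exp (Sg g A + t * c1 A + s * c2 A))
        (∑ A : Finset (Fin K), c2 A * Real.exp (Sg g A + t * c1 A + 0 * c2 A)) 0 := by
      apply HasDerivAt.fun_sum
      intro A _
      have h := (((hasDerivAt_mul_const (c2 A)).const_add (Sg g A + t * c1 A)).exp (x := 0))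
      simpa [mul_comm] using h
    have hD0 : (∑ A : Finset (Fin K), Real.exp (Sg g A + t * c1 A + 0 * c2 A)) = D t := by
      simp [hDdef]
    have h3 := h2.log (by rw [hD0]; exact (hDpos t).ne')
    rw [h3.deriv, hD0]
    congr 1
    simp [hNdef]
  -- Step 3: derivatives of N and D at 0
  have hN' : HasDerivAt N
      (∑ A : Finset (Fin K), c2 A * (c1 A * Real.exp (Sg g A + 0 * c1 A))) 0 := by
    apply HasDerivAt.fun_sum
    intro A _
    exact ((((hasDerivAt_mul_const (c1 A)).const_add (Sg g A)).exp (x := 0)).const_mul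
      (c2 A)).congr_deriv (by ring)
  have hD' : HasDerivAt D
      (∑ A : Finset (Fin K), c1 A * Real.exp (Sg g A + 0 * c1 A)) 0 := by
    apply HasDerivAt.fun_sum
    intro A _
    exact (((hasDerivAt_mul_const (c1 A)).const_add (Sg g A)).exp (x := 0)).congr_deriv
      (by ring)
  have hquot := hN'.div hD' (hDpos 0).ne'
  -- Step 4: identify the pieces
  have hbg : Real.exp (b g) = ∑ A : Finset (Fin K), Real.exp (Sg g A) := by
    rw [hb, Real.exp_log (Finset.sum_pos (fun A _ => Real.exp_pos _) Finset.univ_nonempty)]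
  have hD0 : D 0 = Real.exp (b g) := by
    rw [hbg]; simp [hDdef]
  have hD'val : (∑ A : Finset (Fin K), c1 A * Real.exp (Sg g A + 0 * c1 A))
      = ∑ A ∈ Finset.univ.filter (fun A : Finset (Fin K) => τ1 ⊆ A), Real.exp (Sg g A) := by
    rw [Finset.sum_filter]
    exact Finset.sum_congr rfl fun A _ => by
      simp only [hc1def, ite_mul, one_mul, zero_mul, zero_mul, add_zero]
  have hN0 : N 0
      = ∑ A ∈ Finset.univ.filter (fun A : Finset (Fin K) => τ2 ⊆ A), Real.exp (Sg g A) := by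
    rw [hNdef, Finset.sum_filter]
    exact Finset.sum_congr rfl fun A _ => by
      simp only [hc2def, ite_mul, one_mul, zero_mul, zero_mul, add_zero]
  have hN'val : (∑ A : Finset (Fin K), c2 A * (c1 A * Real.exp (Sg g A + 0 * c1 A)))
      = ∑ A ∈ Finset.univ.filter (fun A : Finset (Fin K) => τ1 ∪ τ2 ⊆ A),
          Real.exp (Sg g A) := by
    rw [Finset.sum_filter]
    refine Finset.sum_congr rfl fun A _ => ?_
    simp only [hc1def, hc2def, Finset.union_subset_iff, zero_mul, add_zero]
    by_cases h1 : τ1 ⊆ A <;> by_cases h2 : τ2 ⊆ A <;> simp [h1, h2]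
  have hexp2 : Real.exp (2 * b g) = Real.exp (b g) * Real.exp (b g) := by
    rw [two_mul, Real.exp_add]
  -- Step 5: first conjunct
  constructor
  · have hfun : (fun t : ℝ => deriv
        (fun s : ℝ => b (g + t • (Pi.single τ1 1 : Finset (Fin K) → ℝ)
          + s • (Pi.single τ2 1 : Finset (Fin K) → ℝ))) 0) = fun t => N t / D t :=
      funext hinner
    rw [hfun]
    refine hquot.congr_deriv ?_
    rw [hD'val, hN0, hN'val, hD0, hexp2]
    ring
  -- Step 6: second conjunct (covariance identity)
  · have hind : ∀ (τ A : Finset (Fin K)),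
        (∏ k ∈ τ, (if k ∈ A then (1 : ℝ) else 0)) = if τ ⊆ A then 1 else 0 :=
      mvb_prod_indicator_aux
    have hsum : ∀ τ : Finset (Fin K),
        (∑ A : Finset (Fin K), Real.exp (Sg g A - b g) *
            ∏ k ∈ τ, (if k ∈ A then (1 : ℝ) else 0))
        = (∑ A ∈ Finset.univ.filter (fun A : Finset (Fin K) => τ ⊆ A),
            Real.exp (Sg g A)) / Real.exp (b g) := by
      intro τ
      rw [Finset.sum_div, Finset.sum_filter]
      refine Finset.sum_congr rfl fun A _ => ?_
      rw [hind, Real.exp_sub]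
      by_cases h : τ ⊆ A <;> simp [h]
    have hsum12 : (∑ A : Finset (Fin K), Real.exp (Sg g A - b g) *
          ((∏ k ∈ τ1, (if k ∈ A then (1 : ℝ) else 0)) *
            ∏ k ∈ τ2, (if k ∈ A then (1 : ℝ) else 0)))
        = (∑ A ∈ Finset.univ.filter (fun A : Finset (Fin K) => τ1 ∪ τ2 ⊆ A),
            Real.exp (Sg g A)) / Real.exp (b g) := by
      rw [Finset.sum_div, Finset.sum_filter]
      refine Finset.sum_congr rfl fun A _ => ?_
      rw [hind, hind, Real.exp_sub]
      simp only [Finset.union_subset_iff]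
      by_cases h1 : τ1 ⊆ A <;> by_cases h2 : τ2 ⊆ A <;> simp [h1, h2]
    rw [hsum12, hsum, hsum, hexp2]
    have hne : Real.exp (b g) ≠ 0 := (Real.exp_pos _).ne'
    field_simp
end
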